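/- Let X be a d-box and λ : {proper boxes of X} → E a dyadic labelling, i.e., a surjection such that whenever A,B and C,D are twin pairs with A∪B = C∪D, one has {λ(A),λ(B)} = {λ(C),λ(D)}. Then for any polybox F ⊆ X and any two proper suits F and G for F, the multiset-independent equality of label sets holds: {λ(A) : A ∈ F} = {λ(A) : A ∈ G}, and moreover for each e ∈ E the number of boxes labelled e is the same in F and G. -/

import Mathlib

open Finset
open scoped Classical

namespace Stmt14

variable {d : ℕ} {X : Fin d → Type*} [∀ i, Fintype (X i)] [∀ i, DecidableEq (X i)]

/-- A box: product of finsets, one per coordinate. -/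
abbrev Box (X : Fin d → Type*) [∀ i, Fintype (X i)] [∀ i, DecidableEq (X i)] :=
  ∀ i, Finset (X i)

/-- Proper box (in every coordinate). -/
def pr (A : Box X) : Prop := ∀ i, (A i).Nonempty ∧ A i ≠ Finset.univ

/-- Box proper exactly on the coordinates in `s`, full elsewhere. -/
def sB (s : Finset (Fin d)) (A : Box X) : Prop :=
  (∀ i ∈ s, (A i).Nonempty ∧ A i ≠ Finset.univ) ∧ ∀ i ∉ s, A i = Finset.univ

def memB (x : ∀ i, X i) (A : Box X) : Prop := ∀ i, x i ∈ A i

/-- A suit relative to the set `s` of active coordinates. -/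
structure Suit (s : Finset (Fin d)) (F : Set (∀ i, X i)) (𝓕 : Finset (Box X)) : Prop where
  sb : ∀ A ∈ 𝓕, sB s A
  dich : ∀ A ∈ 𝓕, ∀ B ∈ 𝓕, A ≠ B → ∃ i, A i = (B i)ᶜ
  un : F = {x | ∃ A ∈ 𝓕, memB x A}

lemma self_ne_compl {α : Type*} [Fintype α] [DecidableEq α] {S : Finset α}
    (h : S.Nonempty) : S ≠ Sᶜ := by
  obtain ⟨x, hx⟩ := h
  intro he
  have : x ∈ Sᶜ := he ▸ hx
  exact (Finset.mem_compl.mp this) hx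

lemma compl_nonempty {α : Type*} [Fintype α] [DecidableEq α] {S : Finset α}
    (h : S ≠ Finset.univ) : Sᶜ.Nonempty := by
  rw [Finset.nonempty_iff_ne_empty]
  intro hc
  exact h (by rwa [Finset.compl_eq_empty_iff] at hc)

lemma compl_proper {α : Type*} [Fintype α] [DecidableEq α] {S : Finset α}
    (h1 : S.Nonempty) (h2 : S ≠ Finset.univ) : Sᶜ.Nonempty ∧ Sᶜ ≠ Finset.univ := by
  constructor
  · by_contra h
    push_neg at h
    rw [Finset.compl_eq_empty_iff] at h
    exact h2 h
  · intro h
    have := congrArg (·ᶜ) h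
    simp at this
    obtain ⟨x, hx⟩ := h1
    exact absurd (this ▸ hx) (Finset.notMem_empty x)

section Chess

/-- Two distinct boxes of a suit sharing a point in coordinate `i₀` must be
dichotomous in another coordinate. -/
lemma dich_ne {s : Finset (Fin d)} {i₀ : Fin d} {F : Set (∀ i, X i)}
    {𝓕 : Finset (Box X)} (hF : Suit s F 𝓕) {x₀ : X i₀} {A B : Box X}
    (hA : A ∈ 𝓕) (hB : B ∈ 𝓕) (hAB : A ≠ B) (hxA : x₀ ∈ A i₀) (hxB : x₀ ∈ B i₀) :
    ∃ i, i ≠ i₀ ∧ A i = (B i)ᶜ := by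
  obtain ⟨i, hi⟩ := hF.dich A hA B hB hAB
  refine ⟨i, fun h => ?_, hi⟩
  subst h
  rw [hi, Finset.mem_compl] at hxA
  exact hxA hxB

/-- Truncation is injective on boxes of the suit containing `x₀`. -/
lemma sect_inj (hX : ∀ i, 2 ≤ Fintype.card (X i))
    {s : Finset (Fin d)} {i₀ : Fin d} {F : Set (∀ i, X i)}
    {𝓕 : Finset (Box X)} (hF : Suit s F 𝓕) (x₀ : X i₀) :
    Set.InjOn (fun A : Box X => Function.update A i₀ Finset.univ)
      ↑(𝓕.filter fun A => x₀ ∈ A i₀) := by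
  intro A hA B hB he
  simp only [Finset.coe_filter, Set.mem_setOf_eq] at hA hB
  by_contra hAB
  obtain ⟨i, hii₀, hi⟩ := dich_ne hF hA.1 hB.1 hAB hA.2 hB.2
  have h1 : A i = B i := by
    have := congrFun he i
    simpa [Function.update_of_ne hii₀] using this
  rw [h1] at hi
  have hBne : (B i).Nonempty := by
    by_cases hmem : i ∈ s
    · exact ((hF.sb B hB.1).1 i hmem).1
    · rw [(hF.sb B hB.1).2 i hmem]
      have : 0 < Fintype.card (X i) := lt_of_lt_of_le (by norm_num) (hX i)
      exact Finset.univ_nonempty_iff.mpr (Fintype.card_pos_iff.mp this)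
  exact self_ne_compl hBne hi

/-- The section of a suit along coordinate `i₀` at the point `x₀`. -/
lemma sect {s' : Finset (Fin d)} {i₀ : Fin d} (hi₀ : i₀ ∉ s') {F : Set (∀ i, X i)}
    {𝓕 : Finset (Box X)} (hF : Suit (insert i₀ s') F 𝓕) (x₀ : X i₀) :
    Suit s' {x | Function.update x i₀ x₀ ∈ F}
      ((𝓕.filter fun A => x₀ ∈ A i₀).image
        (fun A => Function.update A i₀ Finset.univ)) := by
  constructor
  · intro A' hA'
    simp only [Finset.mem_image, Finset.mem_filter] at hA'
    obtain ⟨A, ⟨hA, hxA⟩, rfl⟩ := hA'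
    constructor
    · intro i hi
      have hii₀ : i ≠ i₀ := fun h => hi₀ (h ▸ hi)
      rw [Function.update_of_ne hii₀]
      exact (hF.sb A hA).1 i (Finset.mem_insert_of_mem hi)
    · intro i hi
      by_cases hii₀ : i = i₀
      · subst hii₀; simp
      · rw [Function.update_of_ne hii₀]
        exact (hF.sb A hA).2 i (by simp [hii₀, hi])
  · intro A' hA' B' hB' hne
    simp only [Finset.mem_image, Finset.mem_filter] at hA' hB'
    obtain ⟨A, ⟨hA, hxA⟩, rfl⟩ := hA'
    obtain ⟨B, ⟨hB, hxB⟩, rfl⟩ := hB'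
    have hAB : A ≠ B := fun h => hne (by rw [h])
    obtain ⟨i, hii₀, hi⟩ := dich_ne hF hA hB hAB hxA hxB
    exact ⟨i, by rw [Function.update_of_ne hii₀, Function.update_of_ne hii₀, hi]⟩
  · ext x
    simp only [Set.mem_setOf_eq]
    rw [hF.un]
    simp only [Set.mem_setOf_eq]
    constructor
    · rintro ⟨A, hA, hm⟩
      have hxA : x₀ ∈ A i₀ := by simpa using hm i₀
      refine ⟨Function.update A i₀ Finset.univ, Finset.mem_image_of_mem _
        (Finset.mem_filter.mpr ⟨hA, hxA⟩), ?_⟩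
      intro i
      by_cases hii₀ : i = i₀
      · subst hii₀; simp
      · rw [Function.update_of_ne hii₀]
        simpa [Function.update_of_ne hii₀] using hm i
    · rintro ⟨A', hA', hm⟩
      simp only [Finset.mem_image, Finset.mem_filter] at hA'
      obtain ⟨A, ⟨hA, hxA⟩, rfl⟩ := hA'
      refine ⟨A, hA, ?_⟩
      intro i
      by_cases hii₀ : i = i₀
      · subst hii₀; simpa using hxA
      · rw [Function.update_of_ne hii₀]
        simpa [Function.update_of_ne hii₀] using hm i

theorem chess (hX : ∀ i, 2 ≤ Fintype.card (X i)) (σ : ∀ i, Finset (X i) → Bool)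
    (hσ : ∀ i (S : Finset (X i)), S.Nonempty → S ≠ Finset.univ → σ i Sᶜ = !σ i S)
    (s : Finset (Fin d)) : ∀ (F : Set (∀ i, X i)) (𝓕 𝓖 : Finset (Box X)),
    Suit s F 𝓕 → Suit s F 𝓖 →
    (𝓕.filter fun A => ∀ i ∈ s, σ i (A i) = true).card
      = (𝓖.filter fun A => ∀ i ∈ s, σ i (A i) = true).card := by
  classical
  have hXne : ∀ i, Nonempty (X i) := fun i =>
    Fintype.card_pos_iff.mp (lt_of_lt_of_le (by norm_num) (hX i))
  have hUne : ∀ i, (Finset.univ : Finset (X i)).Nonempty := fun i =>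
    Finset.univ_nonempty_iff.mpr (hXne i)
  induction s using Finset.induction_on with
  | empty =>
    intro F 𝓕 𝓖 hF hG
    have key : ∀ (𝓗 𝓚 : Finset (Box X)), Suit ∅ F 𝓗 → Suit ∅ F 𝓚 → 𝓗 ⊆ 𝓚 := by
      intro 𝓗 𝓚 hH hK A hA
      have hAU : A = fun _ => Finset.univ :=
        funext fun i => (hH.sb A hA).2 i (Finset.notMem_empty i)
      obtain ⟨x⟩ : Nonempty (∀ i, X i) := Classical.nonempty_pi.mpr hXne
      have hxF : x ∈ F := by
        rw [hH.un]
        exact ⟨A, hA, fun i => by rw [hAU]; exact Finset.mem_univ _⟩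
      rw [hK.un] at hxF
      obtain ⟨B, hB, -⟩ := hxF
      have hBU : B = fun _ => Finset.univ :=
        funext fun i => (hK.sb B hB).2 i (Finset.notMem_empty i)
      rwa [hAU, ← hBU]
    rw [Finset.Subset.antisymm (key _ _ hF hG) (key _ _ hG hF)]
  | @insert i₀ s' hi₀ ih =>
    intro F 𝓕 𝓖 hF hG
    have hsplit : ∀ (𝓗 : Finset (Box X)),
        (𝓗.filter fun A => ∀ i ∈ insert i₀ s', σ i (A i) = true)
        = (𝓗.filter fun A => ∀ i ∈ s', σ i (A i) = true).filter
            (fun A => σ i₀ (A i₀) = true) := by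
      intro 𝓗
      rw [Finset.filter_filter]
      apply Finset.filter_congr
      intro A _
      simp only [Finset.forall_mem_insert]
      tauto
    rw [hsplit 𝓕, hsplit 𝓖]
    set P : Box X → Prop := fun A => ∀ i ∈ s', σ i (A i) = true with hPdef
    -- i₀-coordinates of suit boxes are proper
    have hprop : ∀ (𝓗 : Finset (Box X)), Suit (insert i₀ s') F 𝓗 →
        ∀ A ∈ 𝓗.filter P, (A i₀).Nonempty ∧ A i₀ ≠ Finset.univ := fun 𝓗 h A hA =>
      (h.sb A (Finset.mem_filter.mp hA).1).1 i₀ (Finset.mem_insert_self _ _)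
    -- distinct filtered boxes are complementary at i₀
    have k1 : ∀ (𝓗 : Finset (Box X)), Suit (insert i₀ s') F 𝓗 →
        ∀ A ∈ 𝓗.filter P, ∀ B ∈ 𝓗.filter P, A ≠ B → A i₀ = (B i₀)ᶜ := by
      intro 𝓗 h A hA B hB hAB
      rw [Finset.mem_filter] at hA hB
      obtain ⟨i, hi⟩ := h.dich A hA.1 B hB.1 hAB
      by_cases hii₀ : i = i₀
      · subst hii₀; exact hi
      · exfalso
        by_cases his : i ∈ s'
        · have hBi := (h.sb B hB.1).1 i (Finset.mem_insert_of_mem his)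
          have hx : σ i (A i) = !σ i (B i) := by
            rw [hi]; exact hσ i (B i) hBi.1 hBi.2
          rw [hA.2 i his, hB.2 i his] at hx
          simp at hx
        · have hAi : A i = Finset.univ := (h.sb A hA.1).2 i (by simp [hii₀, his])
          have hBi : B i = Finset.univ := (h.sb B hB.1).2 i (by simp [hii₀, his])
          rw [hAi, hBi, Finset.compl_univ] at hi
          obtain ⟨x, hx⟩ := hUne i
          exact Finset.notMem_empty x (hi ▸ hx)
    -- cardinality bound
    have hle : ∀ (𝓗 : Finset (Box X)), Suit (insert i₀ s') F 𝓗 →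
        (𝓗.filter P).card ≤ 2 := by
      intro 𝓗 h
      by_contra hc
      push_neg at hc
      obtain ⟨A, hA, B, hB, C, hC, hAB, hAC, hBC⟩ := Finset.two_lt_card.mp hc
      have h1 := k1 𝓗 h A hA B hB hAB
      have h2 := k1 𝓗 h C hC B hB (fun hh => hBC hh.symm)
      have h3 := k1 𝓗 h A hA C hC hAC
      have : C i₀ = (C i₀)ᶜ := h2.trans (h1.symm.trans h3)
      exact self_ne_compl (hprop 𝓗 h C hC).1 this
    -- counts on sections agree
    have k2 : ∀ x₀ : X i₀,
        ((𝓕.filter P).filter fun A => x₀ ∈ A i₀).card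
        = ((𝓖.filter P).filter fun A => x₀ ∈ A i₀).card := by
      intro x₀
      have h1 := ih _ _ _ (sect hi₀ hF x₀) (sect hi₀ hG x₀)
      have htr : ∀ (𝓗 : Finset (Box X)), Suit (insert i₀ s') F 𝓗 →
          (((𝓗.filter fun A => x₀ ∈ A i₀).image
              fun A => Function.update A i₀ Finset.univ).filter
            (fun A => ∀ i ∈ s', σ i (A i) = true)).card
          = ((𝓗.filter P).filter fun A => x₀ ∈ A i₀).card := by
        intro 𝓗 h
        rw [Finset.filter_image]
        rw [Finset.card_image_of_injOn (Set.InjOn.mono (by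
          intro A hA
          simp only [Finset.coe_filter, Set.mem_setOf_eq, Finset.mem_filter] at hA ⊢
          exact ⟨hA.1.1, hA.1.2⟩) (sect_inj hX h x₀))]
        rw [Finset.filter_filter, Finset.filter_filter]
        congr 1
        apply Finset.filter_congr
        intro A _
        have hupd : ∀ i ∈ s', Function.update A i₀ Finset.univ i = A i := by
          intro i his
          exact Function.update_of_ne (fun hh => hi₀ (by rw [← hh]; exact his)) _ _
        constructor
        · rintro ⟨hx, hP⟩
          exact ⟨fun i his => by rw [← hupd i his]; exact hP i his, hx⟩
        · rintro ⟨hP, hx⟩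
          exact ⟨hx, fun i his => by rw [hupd i his]; exact hP i his⟩
      rw [htr 𝓕 hF, htr 𝓖 hG] at h1
      exact h1
    -- count helpers
    have csing : ∀ (A : Box X) (x₀ : X i₀),
        (({A} : Finset (Box X)).filter fun B => x₀ ∈ B i₀).card
        = if x₀ ∈ A i₀ then 1 else 0 := by
      intro A x₀
      rw [Finset.filter_singleton]
      split <;> simp
    have cpair : ∀ (A B : Box X) (x₀ : X i₀), A ≠ B → A i₀ = (B i₀)ᶜ →
        (({A, B} : Finset (Box X)).filter fun C => x₀ ∈ C i₀).card = 1 := by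
      intro A B x₀ hAB hc
      rw [Finset.filter_insert, Finset.filter_singleton]
      by_cases hx : x₀ ∈ A i₀
      · have hxB : x₀ ∉ B i₀ := by
          rw [hc, Finset.mem_compl] at hx; exact hx
        simp [hx, hxB]
      · have hxB : x₀ ∈ B i₀ := by
          by_contra hxB
          rw [hc, Finset.mem_compl] at hx
          exact hx hxB
        simp [hx, hxB]
    -- final count helpers for the σ-filter
    have qsing : ∀ (A : Box X),
        (({A} : Finset (Box X)).filter fun B => σ i₀ (B i₀) = true).card
        = if σ i₀ (A i₀) = true then 1 else 0 := by
      intro A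
      rw [Finset.filter_singleton]
      split <;> simp
    have qpair : ∀ (A B : Box X), A ≠ B → A i₀ = (B i₀)ᶜ →
        (B i₀).Nonempty → B i₀ ≠ Finset.univ →
        (({A, B} : Finset (Box X)).filter fun C => σ i₀ (C i₀) = true).card = 1 := by
      intro A B hAB hc hB1 hB2
      rw [Finset.filter_insert, Finset.filter_singleton]
      have hσA : σ i₀ (A i₀) = !σ i₀ (B i₀) := by rw [hc]; exact hσ i₀ (B i₀) hB1 hB2
      by_cases hb : σ i₀ (B i₀) = true
      · have : ¬ (σ i₀ (A i₀) = true) := by rw [hσA, hb]; simp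
        simp [this, hb]
      · have : σ i₀ (A i₀) = true := by
          rw [hσA]; simp only [Bool.not_eq_true] at hb; rw [hb]; simp
        simp [this, hb]
    -- classification
    have hcases : ∀ (𝓗 : Finset (Box X)), Suit (insert i₀ s') F 𝓗 →
        (𝓗.filter P) = ∅ ∨ (∃ A, 𝓗.filter P = {A}) ∨
        (∃ A B, A ≠ B ∧ A i₀ = (B i₀)ᶜ ∧ 𝓗.filter P = {A, B}) := by
      intro 𝓗 h
      have := hle 𝓗 h
      interval_cases hcard : (𝓗.filter P).card
      · exact Or.inl (Finset.card_eq_zero.mp hcard)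
      · exact Or.inr (Or.inl (Finset.card_eq_one.mp hcard))
      · obtain ⟨A, B, hAB, hset⟩ := Finset.card_eq_two.mp hcard
        refine Or.inr (Or.inr ⟨A, B, hAB, ?_, hset⟩)
        exact k1 𝓗 h A (by rw [hset]; simp) B (by rw [hset]; simp) hAB
    rcases hcases 𝓕 hF with hT | ⟨A, hT⟩ | ⟨A, B, hAB, hABc, hT⟩ <;>
      rcases hcases 𝓖 hG with hU | ⟨C, hU⟩ | ⟨C, D, hCD, hCDc, hU⟩
    · rw [hT, hU]
    · -- ∅ vs {C} : contradiction
      exfalso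
      obtain ⟨x₀, hx₀⟩ := (hprop 𝓖 hG C (by rw [hU]; simp)).1
      have := k2 x₀
      rw [hT, hU, csing C x₀] at this
      simp [hx₀] at this
    · exfalso
      obtain ⟨x₀, hx₀⟩ := (hprop 𝓖 hG C (by rw [hU]; simp)).1
      have := k2 x₀
      rw [hT, hU, cpair C D x₀ hCD hCDc] at this
      simp at this
    · exfalso
      obtain ⟨x₀, hx₀⟩ := (hprop 𝓕 hF A (by rw [hT]; simp)).1
      have := k2 x₀
      rw [hT, hU, csing A x₀] at this
      simp [hx₀] at this
    · -- {A} vs {C}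
      have hac : A i₀ = C i₀ := by
        apply Finset.ext
        intro x₀
        have := k2 x₀
        rw [hT, hU, csing A x₀, csing C x₀] at this
        by_cases h1 : x₀ ∈ A i₀ <;> by_cases h2 : x₀ ∈ C i₀ <;>
          simp [h1, h2] at this ⊢
      rw [hT, hU, qsing A, qsing C, hac]
    · exfalso
      obtain ⟨x₀, hx₀⟩ := compl_nonempty (hprop 𝓕 hF A (by rw [hT]; simp)).2
      rw [Finset.mem_compl] at hx₀
      have := k2 x₀
      rw [hT, hU, csing A x₀, cpair C D x₀ hCD hCDc] at this
      simp [hx₀] at this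
    · exfalso
      obtain ⟨x₀, hx₀⟩ := (hprop 𝓕 hF A (by rw [hT]; simp)).1
      have := k2 x₀
      rw [hT, hU, cpair A B x₀ hAB hABc] at this
      simp at this
    · -- {A,B} vs {C} : pick x₀ outside C i₀
      exfalso
      obtain ⟨x₀, hx₀⟩ := compl_nonempty (hprop 𝓖 hG C (by rw [hU]; simp)).2
      rw [Finset.mem_compl] at hx₀
      have := k2 x₀
      rw [hT, hU, cpair A B x₀ hAB hABc, csing C x₀] at this
      simp [hx₀] at this
    · -- {A,B} vs {C,D}
      rw [hT, hU, qpair A B hAB hABc (hprop 𝓕 hF B (by rw [hT]; simp)).1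
          (hprop 𝓕 hF B (by rw [hT]; simp)).2,
        qpair C D hCD hCDc (hprop 𝓖 hG D (by rw [hU]; simp)).1
          (hprop 𝓖 hG D (by rw [hU]; simp)).2]

end Chess

section Expand

/-- Flip (complement) the coordinates in `L`. -/
def flipS (L : Finset (Fin d)) (A : Box X) : Box X :=
  fun i => if i ∈ L then (A i)ᶜ else A i

lemma flipS_empty (A : Box X) : flipS ∅ A = A := by
  funext i; simp [flipS]

lemma flipS_insert {L : Finset (Fin d)} {j : Fin d} (hj : j ∉ L) (A : Box X) :
    flipS (insert j L) A = Function.update (flipS L A) j ((A j)ᶜ) := by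
  funext i
  by_cases hij : i = j
  · subst hij; simp [flipS, hj]
  · simp [flipS, Function.update_of_ne hij, hij]

lemma flipS_insert_flip {L : Finset (Fin d)} {j : Fin d} (hj : j ∉ L) (A : Box X) :
    flipS (insert j L) (Function.update A j ((A j)ᶜ)) = flipS L A := by
  funext i
  by_cases hij : i = j
  · subst hij; simp [flipS, hj]
  · simp [flipS, Function.update_of_ne hij, hij]

lemma flipS_flip {L : Finset (Fin d)} {j : Fin d} (hj : j ∉ L) (A : Box X) :
    flipS L (Function.update A j ((A j)ᶜ)) = flipS (insert j L) A := by
  funext i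
  by_cases hij : i = j
  · subst hij; simp [flipS, hj]
  · simp [flipS, Function.update_of_ne hij, hij]

lemma pr_flipS {A : Box X} (hA : pr A) (L : Finset (Fin d)) : pr (flipS L A) := by
  intro i
  by_cases hi : i ∈ L
  · simp only [flipS, hi, if_pos]
    exact compl_proper (hA i).1 (hA i).2
  · simp only [flipS, hi, if_neg, if_false]
    exact hA i

lemma pr_update_compl {A : Box X} (hA : pr A) (j : Fin d) :
    pr (Function.update A j ((A j)ᶜ)) := by
  intro i
  by_cases hij : i = j
  · subst hij; rw [Function.update_self]; exact compl_proper (hA i).1 (hA i).2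
  · rw [Function.update_of_ne hij]; exact hA i

/-- `φ K`: the `K`-alternating part of `φ`. -/
def phiK (φ : Box X → ℚ) (K : Finset (Fin d)) (A : Box X) : ℚ :=
  ∑ L ∈ (Finset.univ : Finset (Fin d)).powerset,
    (-1 : ℚ) ^ ((L ∩ K).card) * φ (flipS L A)

/-- The pair property: the sum of the values on a twin pair does not depend on the
common coordinate. -/
def PairProp (φ : Box X → ℚ) : Prop := ∀ (i : Fin d) (A C : Box X), pr A → pr C →
  (∀ j, j ≠ i → A j = C j) →
  φ A + φ (Function.update A i ((A i)ᶜ)) = φ C + φ (Function.update C i ((C i)ᶜ))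

lemma prod_sign (s L : Finset (Fin d)) :
    (∏ i ∈ s, if i ∈ L then (-1:ℚ) else 1) = (-1:ℚ) ^ ((s ∩ L).card) := by
  rw [Finset.prod_ite, Finset.prod_const, Finset.prod_const, one_pow, mul_one]
  congr 1

lemma sum_pm (L : Finset (Fin d)) :
    ∑ K ∈ (Finset.univ : Finset (Fin d)).powerset, (-1:ℚ)^((L ∩ K).card)
      = if L = ∅ then (2:ℚ)^d else 0 := by
  have h2 : ∑ K ∈ (Finset.univ : Finset (Fin d)).powerset, (-1:ℚ)^((L ∩ K).card)
      = ∏ i ∈ Finset.univ, ((if i ∈ L then (-1:ℚ) else 1) + 1) := by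
    rw [Finset.prod_add]
    simp only [Finset.prod_const_one, mul_one]
    apply Finset.sum_congr rfl
    intro t _
    rw [prod_sign, Finset.inter_comm]
  rw [h2]
  by_cases hL : L = ∅
  · subst hL
    simp only [Finset.notMem_empty, if_false, ite_false]
    rw [Finset.prod_const]
    norm_num
  · obtain ⟨j, hj⟩ := Finset.nonempty_iff_ne_empty.mpr hL
    rw [if_neg hL]
    apply Finset.prod_eq_zero (Finset.mem_univ j)
    simp [hj]

lemma sum_phiK (φ : Box X → ℚ) (A : Box X) :
    ∑ K ∈ (Finset.univ : Finset (Fin d)).powerset, phiK φ K A = 2^d * φ A := by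
  unfold phiK
  rw [Finset.sum_comm]
  have h1 : ∀ L ∈ (Finset.univ : Finset (Fin d)).powerset,
      ∑ K ∈ (Finset.univ : Finset (Fin d)).powerset, (-1:ℚ)^((L ∩ K).card) * φ (flipS L A)
      = (if L = ∅ then (2:ℚ)^d else 0) * φ (flipS L A) := by
    intro L _
    rw [← Finset.sum_mul, sum_pm]
  rw [Finset.sum_congr rfl h1]
  rw [Finset.sum_eq_single (∅ : Finset (Fin d))]
  · rw [if_pos rfl, flipS_empty]
  · intro L _ hL
    rw [if_neg hL, zero_mul]
  · intro h
    exact absurd (Finset.empty_mem_powerset _) h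

lemma phiK_split (φ : Box X → ℚ) (K : Finset (Fin d)) (j : Fin d) (B : Box X) :
    phiK φ K B = ∑ L ∈ ((Finset.univ : Finset (Fin d)).erase j).powerset,
      ((-1:ℚ)^((L ∩ K).card) * φ (flipS L B)
        + (-1:ℚ)^(((insert j L) ∩ K).card) * φ (flipS (insert j L) B)) := by
  have h := Finset.sum_powerset_insert (Finset.notMem_erase j (Finset.univ))
    (f := fun L => (-1:ℚ)^((L ∩ K).card) * φ (flipS L B))
  rw [Finset.insert_erase (Finset.mem_univ j)] at h
  unfold phiK
  rw [h, ← Finset.sum_add_distrib]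

lemma phiK_indep (φ : Box X → ℚ) (hφ : PairProp φ) {K : Finset (Fin d)} {j : Fin d}
    (hj : j ∉ K) {A C : Box X} (hA : pr A) (hC : pr C)
    (hAC : ∀ t, t ≠ j → A t = C t) :
    phiK φ K A = phiK φ K C := by
  rw [phiK_split φ K j A, phiK_split φ K j C]
  apply Finset.sum_congr rfl
  intro L hL
  have hjL : j ∉ L := fun h =>
    Finset.notMem_erase j _ (Finset.mem_powerset.mp hL h)
  have hsign : ((insert j L) ∩ K).card = (L ∩ K).card := by
    rw [Finset.insert_inter_of_notMem hj]
  rw [hsign, flipS_insert hjL A, flipS_insert hjL C, ← mul_add, ← mul_add]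
  congr 1
  have h1 : (flipS L A) j = A j := by simp [flipS, hjL]
  have h2 : (flipS L C) j = C j := by simp [flipS, hjL]
  have key := hφ j (flipS L A) (flipS L C) (pr_flipS hA L) (pr_flipS hC L)
    (fun t ht => by simp only [flipS]; rw [hAC t ht])
  rw [h1, h2] at key
  exact key

lemma phiK_agree_aux (φ : Box X → ℚ) (hφ : PairProp φ) (K : Finset (Fin d)) :
    ∀ (D : Finset (Fin d)) (A C : Box X), pr A → pr C →
    (∀ i ∈ K, A i = C i) → (∀ i, A i ≠ C i → i ∈ D) → phiK φ K A = phiK φ K C := by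
  intro D
  induction D using Finset.induction_on with
  | empty =>
    intro A C hA hC hK hD
    have : A = C := funext fun i => by
      by_contra h
      exact absurd (hD i h) (Finset.notMem_empty i)
    rw [this]
  | @insert j D' hjD ih =>
    intro A C hA hC hK hD
    by_cases hAC : A j = C j
    · apply ih A C hA hC hK
      intro i hi
      rcases Finset.mem_insert.mp (hD i hi) with h | h
      · exact absurd (h ▸ hAC) hi
      · exact h
    · have hjK : j ∉ K := fun h => hAC (hK j h)
      have hprA' : pr (Function.update A j (C j)) := by
        intro i
        by_cases hij : i = j
        · subst hij; rw [Function.update_self]; exact hC i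
        · rw [Function.update_of_ne hij]; exact hA i
      have h1 : phiK φ K A = phiK φ K (Function.update A j (C j)) :=
        phiK_indep φ hφ hjK hA hprA'
          (fun t ht => (Function.update_of_ne ht _ _).symm)
      rw [h1]
      apply ih _ C hprA' hC
      · intro i hi
        by_cases hij : i = j
        · subst hij; rw [Function.update_self]
        · rw [Function.update_of_ne hij]; exact hK i hi
      · intro i hi
        by_cases hij : i = j
        · subst hij; rw [Function.update_self] at hi; exact absurd rfl hi
        · rw [Function.update_of_ne hij] at hi
          rcases Finset.mem_insert.mp (hD i hi) with h | h
          · exact absurd h hij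
          · exact h

lemma phiK_agree (φ : Box X → ℚ) (hφ : PairProp φ) (K : Finset (Fin d))
    {A C : Box X} (hA : pr A) (hC : pr C) (hK : ∀ i ∈ K, A i = C i) :
    phiK φ K A = phiK φ K C :=
  phiK_agree_aux φ hφ K Finset.univ A C hA hC hK (fun i _ => Finset.mem_univ i)

lemma phiK_flip (φ : Box X → ℚ) {K : Finset (Fin d)} {j : Fin d} (hjK : j ∈ K)
    (A : Box X) :
    phiK φ K (Function.update A j ((A j)ᶜ)) = - phiK φ K A := by
  rw [phiK_split φ K j A, phiK_split φ K j (Function.update A j ((A j)ᶜ)),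
    ← Finset.sum_neg_distrib]
  apply Finset.sum_congr rfl
  intro L hL
  have hjL : j ∉ L := fun h =>
    Finset.notMem_erase j _ (Finset.mem_powerset.mp hL h)
  have hsign : ((insert j L) ∩ K).card = (L ∩ K).card + 1 := by
    rw [Finset.insert_inter_of_mem hjK]
    exact Finset.card_insert_of_notMem
      (fun h => hjL (Finset.mem_of_mem_inter_left h))
  rw [flipS_flip hjL, flipS_insert_flip hjL, hsign, pow_succ]
  ring

lemma phiK_flipS (φ : Box X → ℚ) {K : Finset (Fin d)} (A : Box X) :
    ∀ L : Finset (Fin d), L ⊆ K →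
      phiK φ K (flipS L A) = (-1:ℚ)^(L.card) * phiK φ K A := by
  intro L
  induction L using Finset.induction_on with
  | empty => intro _; rw [flipS_empty]; simp
  | @insert j L' hjL' ih =>
    intro hLK
    have hsub : L' ⊆ K := fun t ht => hLK (Finset.mem_insert_of_mem ht)
    have hjK : j ∈ K := hLK (Finset.mem_insert_self j L')
    have hAj : (flipS L' A) j = A j := by simp [flipS, hjL']
    rw [flipS_insert hjL' A, ← hAj, phiK_flip φ hjK (flipS L' A), ih hsub,
      Finset.card_insert_of_notMem hjL', pow_succ]
    ring

/-- Elementary antisymmetric weight attached to a proper set `R`. -/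
def fD {α : Type*} [Fintype α] [DecidableEq α] (R S : Finset α) : ℚ :=
  (if S = R then 1 else 0) - (if S = Rᶜ then 1 else 0)

lemma phiK_expand (φ : Box X → ℚ) (hφ : PairProp φ) (B0 : Box X) (hB0 : pr B0)
    (K : Finset (Fin d)) {A : Box X} (hA : pr A) :
    (2:ℚ)^(K.card) * phiK φ K A
      = ∑ R ∈ (Finset.univ : Finset (Box X)).filter
          (fun R => pr R ∧ ∀ i ∉ K, R i = B0 i),
          phiK φ K R * ∏ i ∈ K, fD (R i) (A i) := by
  classical
  set mapR : Finset (Fin d) → Box X :=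
    fun L => fun i => if i ∈ K then (flipS L A) i else B0 i with hmapR
  have hprmapR : ∀ L, pr (mapR L) := by
    intro L i
    simp only [hmapR]
    by_cases hiK : i ∈ K
    · rw [if_pos hiK]; exact pr_flipS hA L i
    · rw [if_neg hiK]; exact hB0 i
  have hsub : K.powerset.image mapR ⊆ (Finset.univ : Finset (Box X)).filter
      (fun R => pr R ∧ ∀ i ∉ K, R i = B0 i) := by
    intro R hR
    obtain ⟨L, hL, rfl⟩ := Finset.mem_image.mp hR
    refine Finset.mem_filter.mpr ⟨Finset.mem_univ _, hprmapR L, ?_⟩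
    intro i hiK
    simp [hmapR, hiK]
  have hzero : ∀ R ∈ (Finset.univ : Finset (Box X)).filter
      (fun R => pr R ∧ ∀ i ∉ K, R i = B0 i), R ∉ K.powerset.image mapR →
      phiK φ K R * ∏ i ∈ K, fD (R i) (A i) = 0 := by
    intro R hR hnot
    rw [Finset.mem_filter] at hR
    have hall : ¬ (∀ i ∈ K, A i = R i ∨ A i = (R i)ᶜ) := by
      intro hall
      apply hnot
      refine Finset.mem_image.mpr ⟨K.filter (fun i => R i ≠ A i),
        Finset.mem_powerset.mpr (Finset.filter_subset _ _), ?_⟩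
      funext i
      by_cases hiK : i ∈ K
      · simp only [hmapR, if_pos hiK, flipS]
        by_cases hRA : R i = A i
        · rw [if_neg (by simp [hiK, hRA])]
          exact hRA.symm
        · rw [if_pos (by simp [hiK, hRA])]
          rcases hall i hiK with h | h
          · exact absurd h.symm hRA
          · rw [h, compl_compl]
      · simp only [hmapR, if_neg hiK]
        exact (hR.2.2 i hiK).symm
    push_neg at hall
    obtain ⟨i, hiK, h1, h2⟩ := hall
    rw [Finset.prod_eq_zero hiK (by simp [fD, h1, h2]), mul_zero]
  rw [← Finset.sum_subset hsub hzero]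
  have hinj : ∀ L1 ∈ K.powerset, ∀ L2 ∈ K.powerset, mapR L1 = mapR L2 → L1 = L2 := by
    intro L1 h1 L2 h2 he
    have h1' := Finset.mem_powerset.mp h1
    have h2' := Finset.mem_powerset.mp h2
    ext i
    by_cases hiK : i ∈ K
    · have := congrFun he i
      simp only [hmapR, if_pos hiK, flipS] at this
      constructor
      · intro hi1
        by_contra hi2
        rw [if_pos hi1, if_neg hi2] at this
        exact self_ne_compl (hA i).1 this.symm
      · intro hi2
        by_contra hi1
        rw [if_neg hi1, if_pos hi2] at this
        exact self_ne_compl (hA i).1 this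
    · constructor
      · intro hi1; exact absurd (h1' hi1) hiK
      · intro hi2; exact absurd (h2' hi2) hiK
  rw [Finset.sum_image hinj]
  have hterm : ∀ L ∈ K.powerset,
      phiK φ K (mapR L) * ∏ i ∈ K, fD ((mapR L) i) (A i) = phiK φ K A := by
    intro L hL
    have hLK := Finset.mem_powerset.mp hL
    have h1 : phiK φ K (mapR L) = phiK φ K (flipS L A) :=
      phiK_agree φ hφ K (hprmapR L) (pr_flipS hA L)
        (fun i hiK => by simp [hmapR, hiK])
    have h3 : (∏ i ∈ K, fD ((mapR L) i) (A i)) = (-1:ℚ)^(L.card) := by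
      have hpt : ∀ i ∈ K, fD ((mapR L) i) (A i) = (if i ∈ L then (-1:ℚ) else 1) := by
        intro i hiK
        have hne : A i ≠ (A i)ᶜ := self_ne_compl (hA i).1
        by_cases hiL : i ∈ L
        · simp only [hmapR, if_pos hiK, flipS, if_pos hiL]
          simp [fD, hne, compl_compl]
        · simp only [hmapR, if_pos hiK, flipS, if_neg hiL]
          simp [fD, hne]
      rw [Finset.prod_congr rfl hpt, prod_sign, Finset.inter_comm,
        Finset.inter_eq_left.mpr hLK]
    rw [h1, phiK_flipS φ A L hLK, h3]
    rw [mul_comm ((-1:ℚ)^L.card) (phiK φ K A), mul_assoc, ← mul_pow]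
    norm_num
  rw [Finset.sum_congr rfl hterm, Finset.sum_const, Finset.card_powerset,
    nsmul_eq_mul]
  norm_num

noncomputable def beta (i : Fin d) : Finset (X i) → Bool :=
  fun S => decide ((Fintype.equivFin (Finset (X i))) S < (Fintype.equivFin (Finset (X i))) Sᶜ)

lemma beta_pol (i : Fin d) (S : Finset (X i)) (h1 : S.Nonempty) :
    beta i Sᶜ = !beta i S := by
  have hne : S ≠ Sᶜ := self_ne_compl h1
  have henc : (Fintype.equivFin (Finset (X i))) S ≠ (Fintype.equivFin (Finset (X i))) Sᶜ :=
    fun h => hne ((Fintype.equivFin (Finset (X i))).injective h)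
  unfold beta
  rw [compl_compl]
  rcases lt_or_gt_of_ne henc with h | h
  · simp [h, lt_asymm h]
  · simp [h, lt_asymm h]

noncomputable def sigP (i : Fin d) (R : Finset (X i)) (b : Bool) : Finset (X i) → Bool :=
  fun S => if S = R then b else if S = Rᶜ then !b else beta i S

lemma sigP_pol (i : Fin d) (R : Finset (X i)) (b : Bool) (hR1 : R.Nonempty)
    (S : Finset (X i)) (h1 : S.Nonempty) :
    sigP i R b Sᶜ = !sigP i R b S := by
  have hRc : R ≠ Rᶜ := self_ne_compl hR1
  unfold sigP
  by_cases hSR : S = R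
  · subst hSR
    have hc : Sᶜ ≠ S := fun h => hRc h.symm
    rw [if_neg hc, if_pos rfl, if_pos rfl]
  · by_cases hSRc : S = Rᶜ
    · subst hSRc
      rw [compl_compl, if_pos rfl, if_neg hSR, if_pos rfl, Bool.not_not]
    · have hc1 : Sᶜ ≠ R := fun h => hSRc (by rw [← h, compl_compl])
      have hc2 : Sᶜ ≠ Rᶜ := fun h => hSR (compl_injective h)
      rw [if_neg hc1, if_neg hc2, if_neg hSR, if_neg hSRc]
      exact beta_pol i S h1

lemma fD_split (i : Fin d) (R S : Finset (X i)) (hR1 : R.Nonempty) :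
    fD R S = (if sigP i R true S then (1:ℚ) else 0)
      - (if sigP i R false S then (1:ℚ) else 0) := by
  have hRc : R ≠ Rᶜ := self_ne_compl hR1
  unfold fD sigP
  by_cases h1 : S = R
  · subst h1
    rw [if_pos rfl, if_pos rfl, if_neg hRc, if_pos rfl]
    norm_num
  · by_cases h2 : S = Rᶜ
    · subst h2
      rw [if_neg h1, if_pos rfl, if_neg h1, if_pos rfl, if_neg h1, if_pos rfl]
      norm_num
    · rw [if_neg h1, if_neg h2, if_neg h1, if_neg h2, if_neg h1, if_neg h2]
      norm_num

lemma one_split (i : Fin d) (S : Finset (X i)) :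
    (1:ℚ) = (if beta i S then (1:ℚ) else 0) + (if !beta i S then (1:ℚ) else 0) := by
  cases h : beta i S <;> simp [h]

lemma sum_prod_fD_eq (hX : ∀ i, 2 ≤ Fintype.card (X i))
    {F : Set (∀ i, X i)} {𝓕 𝓖 : Finset (Box X)}
    (hF : Suit Finset.univ F 𝓕) (hG : Suit Finset.univ F 𝓖)
    (K : Finset (Fin d)) (R : Box X) (hR : pr R) :
    ∑ A ∈ 𝓕, ∏ i ∈ K, fD (R i) (A i) = ∑ A ∈ 𝓖, ∏ i ∈ K, fD (R i) (A i) := by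
  classical
  set τ : Finset (Fin d) → ∀ i, Finset (X i) → Bool := fun t i S =>
    if i ∈ t then (if i ∈ K then sigP i (R i) true S else beta i S)
    else (if i ∈ K then sigP i (R i) false S else !beta i S) with hτ
  have hτpol : ∀ t i (S : Finset (X i)), S.Nonempty → S ≠ Finset.univ →
      τ t i Sᶜ = !τ t i S := by
    intro t i S h1 _h2
    simp only [hτ]
    by_cases hit : i ∈ t <;> by_cases hiK : i ∈ K <;>
      simp [hit, hiK, sigP_pol i (R i) _ (hR i).1 S h1, beta_pol i S h1]
  have key : ∀ (𝓗 : Finset (Box X)), (∀ A ∈ 𝓗, pr A) →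
      ∑ A ∈ 𝓗, ∏ i ∈ K, fD (R i) (A i)
      = ∑ t ∈ (Finset.univ : Finset (Fin d)).powerset,
          (-1:ℚ)^(((Finset.univ \ t) ∩ K).card)
            * ((𝓗.filter fun A => ∀ i ∈ (Finset.univ : Finset (Fin d)),
                τ t i (A i) = true).card : ℚ) := by
    intro 𝓗 hpr
    have hA1 : ∀ A ∈ 𝓗, (∏ i ∈ K, fD (R i) (A i))
        = ∑ t ∈ (Finset.univ : Finset (Fin d)).powerset,
            (-1:ℚ)^(((Finset.univ \ t) ∩ K).card)
              * (if ∀ i ∈ (Finset.univ : Finset (Fin d)), τ t i (A i) = true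
                  then (1:ℚ) else 0) := by
      intro A hA
      have e1 : (∏ i ∈ K, fD (R i) (A i))
          = ∏ i ∈ (Finset.univ : Finset (Fin d)),
              ((if (if i ∈ K then sigP i (R i) true (A i) else beta i (A i))
                  then (1:ℚ) else 0)
               + ((if i ∈ K then (-1:ℚ) else 1)
                  * (if (if i ∈ K then sigP i (R i) false (A i) else !beta i (A i))
                      then (1:ℚ) else 0))) := by
        calc (∏ i ∈ K, fD (R i) (A i))
            = ∏ i ∈ K,
              ((if (if i ∈ K then sigP i (R i) true (A i) else beta i (A i))
                  then (1:ℚ) else 0)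
               + ((if i ∈ K then (-1:ℚ) else 1)
                  * (if (if i ∈ K then sigP i (R i) false (A i) else !beta i (A i))
                      then (1:ℚ) else 0))) :=
              Finset.prod_congr rfl (fun i hiK => by
                rw [fD_split i (R i) (A i) (hR i).1]
                simp only [if_pos hiK]
                ring)
          _ = _ :=
              Finset.prod_subset (Finset.subset_univ K) (fun i _ hiK => by
                simp only [if_neg hiK, one_mul]
                exact (one_split i (A i)).symm)
      rw [e1, Finset.prod_add]
      apply Finset.sum_congr rfl
      intro t ht
      have htu := Finset.mem_powerset.mp ht
      have e2 : (∏ i ∈ t, (if (if i ∈ K then sigP i (R i) true (A i) else beta i (A i))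
            then (1:ℚ) else 0))
          = ∏ i ∈ t, (if τ t i (A i) = true then (1:ℚ) else 0) := by
        apply Finset.prod_congr rfl
        intro i hit
        simp [hτ, hit]
      have e3 : (∏ i ∈ Finset.univ \ t,
            ((if i ∈ K then (-1:ℚ) else 1)
              * (if (if i ∈ K then sigP i (R i) false (A i) else !beta i (A i))
                  then (1:ℚ) else 0)))
          = ((-1:ℚ)^(((Finset.univ \ t) ∩ K).card))
              * ∏ i ∈ Finset.univ \ t, (if τ t i (A i) = true then (1:ℚ) else 0) := by
        rw [Finset.prod_mul_distrib, prod_sign]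
        congr 1
        apply Finset.prod_congr rfl
        intro i hit
        have hit' : i ∉ t := (Finset.mem_sdiff.mp hit).2
        simp [hτ, hit']
      rw [e2, e3]
      have e4 : (∏ i ∈ t, (if τ t i (A i) = true then (1:ℚ) else 0))
          * (∏ i ∈ Finset.univ \ t, (if τ t i (A i) = true then (1:ℚ) else 0))
          = if ∀ i ∈ (Finset.univ : Finset (Fin d)), τ t i (A i) = true
              then (1:ℚ) else 0 := by
        rw [mul_comm, Finset.prod_sdiff htu, Finset.prod_boole]
        convert rfl
      rw [← e4]
      ring
    rw [Finset.sum_congr rfl hA1, Finset.sum_comm]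
    apply Finset.sum_congr rfl
    intro t _
    rw [← Finset.mul_sum]
    congr 1
    rw [Finset.sum_boole]
  rw [key 𝓕 (fun A hA i => (hF.sb A hA).1 i (Finset.mem_univ i)),
    key 𝓖 (fun A hA i => (hG.sb A hA).1 i (Finset.mem_univ i))]
  apply Finset.sum_congr rfl
  intro t _
  rw [chess hX (τ t) (hτpol t) Finset.univ F 𝓕 𝓖 hF hG]

lemma sum_phi_eq (hX : ∀ i, 2 ≤ Fintype.card (X i))
    {F : Set (∀ i, X i)} {𝓕 𝓖 : Finset (Box X)}
    (hF : Suit Finset.univ F 𝓕) (hG : Suit Finset.univ F 𝓖)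
    (φ : Box X → ℚ) (hφ : PairProp φ) :
    ∑ A ∈ 𝓕, φ A = ∑ A ∈ 𝓖, φ A := by
  classical
  -- a base proper box
  obtain ⟨x⟩ : Nonempty (∀ i, X i) := Classical.nonempty_pi.mpr (fun i =>
    Fintype.card_pos_iff.mp (lt_of_lt_of_le (by norm_num) (hX i)))
  set B0 : Box X := fun i => {x i} with hB0def
  have hB0 : pr B0 := by
    intro i
    refine ⟨Finset.singleton_nonempty _, fun h => ?_⟩
    have := congrArg Finset.card h
    rw [Finset.card_singleton, Finset.card_univ] at this
    have := hX i
    omega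
  have pr𝓕 : ∀ A ∈ 𝓕, pr A := fun A hA i => (hF.sb A hA).1 i (Finset.mem_univ i)
  have pr𝓖 : ∀ A ∈ 𝓖, pr A := fun A hA i => (hG.sb A hA).1 i (Finset.mem_univ i)
  have hK : ∀ K : Finset (Fin d),
      ∑ A ∈ 𝓕, phiK φ K A = ∑ A ∈ 𝓖, phiK φ K A := by
    intro K
    have h2 : ((2:ℚ)^(K.card)) ≠ 0 := by positivity
    have hstep : ∀ (𝓗 : Finset (Box X)), (∀ A ∈ 𝓗, pr A) →
        (2:ℚ)^(K.card) * ∑ A ∈ 𝓗, phiK φ K A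
        = ∑ R ∈ (Finset.univ : Finset (Box X)).filter
            (fun R => pr R ∧ ∀ i ∉ K, R i = B0 i),
            phiK φ K R * ∑ A ∈ 𝓗, ∏ i ∈ K, fD (R i) (A i) := by
      intro 𝓗 hpr
      rw [Finset.mul_sum,
        Finset.sum_congr rfl (fun A hA => phiK_expand φ hφ B0 hB0 K (hpr A hA)),
        Finset.sum_comm]
      exact Finset.sum_congr rfl (fun R _ => (Finset.mul_sum _ _ _).symm)
    apply mul_left_cancel₀ h2
    rw [hstep 𝓕 pr𝓕, hstep 𝓖 pr𝓖]
    apply Finset.sum_congr rfl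
    intro R hR
    rw [Finset.mem_filter] at hR
    rw [sum_prod_fD_eq hX hF hG K R hR.2.1]
  have h2d : ((2:ℚ)^d) ≠ 0 := by positivity
  apply mul_left_cancel₀ h2d
  calc (2:ℚ)^d * ∑ A ∈ 𝓕, φ A
      = ∑ A ∈ 𝓕, ∑ K ∈ (Finset.univ : Finset (Fin d)).powerset, phiK φ K A := by
        rw [Finset.mul_sum]
        exact Finset.sum_congr rfl (fun A _ => (sum_phiK φ A).symm)
    _ = ∑ K ∈ (Finset.univ : Finset (Fin d)).powerset, ∑ A ∈ 𝓕, phiK φ K A :=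
        Finset.sum_comm
    _ = ∑ K ∈ (Finset.univ : Finset (Fin d)).powerset, ∑ A ∈ 𝓖, phiK φ K A :=
        Finset.sum_congr rfl (fun K _ => hK K)
    _ = ∑ A ∈ 𝓖, ∑ K ∈ (Finset.univ : Finset (Fin d)).powerset, phiK φ K A :=
        Finset.sum_comm
    _ = (2:ℚ)^d * ∑ A ∈ 𝓖, φ A := by
        rw [Finset.mul_sum]
        exact Finset.sum_congr rfl (fun A _ => sum_phiK φ A)

lemma ind_pair {E : Type*} [DecidableEq E] (a b c f e : E)
    (h : ({a, b} : Set E) = {c, f}) :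
    ((if a = e then (1:ℚ) else 0) + (if b = e then 1 else 0))
      = (if c = e then 1 else 0) + (if f = e then 1 else 0) := by
  have ha : a = c ∨ a = f := by
    have := Set.ext_iff.mp h a
    simpa using this.mp (by simp)
  have hb : b = c ∨ b = f := by
    have := Set.ext_iff.mp h b
    simpa using this.mp (by simp)
  have hc : c = a ∨ c = b := by
    have := Set.ext_iff.mp h c
    simpa using this.mpr (by simp)
  have hf : f = a ∨ f = b := by
    have := Set.ext_iff.mp h f
    simpa using this.mpr (by simp)
  rcases hc with rfl | rfl <;> rcases hf with rfl | rfl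
  · rcases hb with rfl | rfl <;> ring
  · ring
  · ring
  · rcases ha with rfl | rfl <;> ring

end Expand

end Stmt14

/-- a dyadic labelling assigns to the boxes of any two proper suits of
the same polybox the same set of labels, and even with the same multiplicities. -/
theorem stmt_14 {d : ℕ} (X : Fin d → Type*) [∀ i, Fintype (X i)] [∀ i, DecidableEq (X i)]
    (hX : ∀ i, 2 ≤ Fintype.card (X i))
    (E : Type*) [DecidableEq E]
    (lab : (∀ i, Finset (X i)) → E)
    (hsurj : ∀ e : E, ∃ A : ∀ i, Finset (X i),
      (∀ i, (A i).Nonempty ∧ A i ≠ Finset.univ) ∧ lab A = e)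
    (htwin : ∀ (i : Fin d) (A C : ∀ i, Finset (X i)),
      (∀ j, (A j).Nonempty ∧ A j ≠ Finset.univ) →
      (∀ j, (C j).Nonempty ∧ C j ≠ Finset.univ) →
      (∀ j, j ≠ i → A j = C j) →
      ({lab A, lab (Function.update A i (A i)ᶜ)} : Set E)
        = {lab C, lab (Function.update C i (C i)ᶜ)})
    (F : Set (∀ i, X i))
    (𝓕 𝓖 : Finset (∀ i, Finset (X i)))
    (h𝓕p : ∀ A ∈ 𝓕, ∀ i, (A i).Nonempty ∧ A i ≠ Finset.univ)
    (h𝓖p : ∀ A ∈ 𝓖, ∀ i, (A i).Nonempty ∧ A i ≠ Finset.univ)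
    (h𝓕d : ∀ A ∈ 𝓕, ∀ B ∈ 𝓕, A ≠ B → ∃ i, A i = (B i)ᶜ)
    (h𝓖d : ∀ A ∈ 𝓖, ∀ B ∈ 𝓖, A ≠ B → ∃ i, A i = (B i)ᶜ)
    (h𝓕u : F = {x | ∃ A ∈ 𝓕, ∀ i, x i ∈ A i})
    (h𝓖u : F = {x | ∃ A ∈ 𝓖, ∀ i, x i ∈ A i}) :
    𝓕.image lab = 𝓖.image lab ∧
    ∀ e : E, (𝓕.filter (fun A => lab A = e)).card
      = (𝓖.filter (fun A => lab A = e)).card := by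
  classical
  have hsuit𝓕 : Stmt14.Suit Finset.univ F 𝓕 :=
    ⟨fun A hA => ⟨fun i _ => h𝓕p A hA i, fun i hi => absurd (Finset.mem_univ i) hi⟩,
      h𝓕d, h𝓕u⟩
  have hsuit𝓖 : Stmt14.Suit Finset.univ F 𝓖 :=
    ⟨fun A hA => ⟨fun i _ => h𝓖p A hA i, fun i hi => absurd (Finset.mem_univ i) hi⟩,
      h𝓖d, h𝓖u⟩
  have hcount : ∀ e : E, (𝓕.filter (fun A => lab A = e)).card
      = (𝓖.filter (fun A => lab A = e)).card := by
    intro e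
    have hφ : Stmt14.PairProp (fun A => if lab A = e then (1:ℚ) else 0) := by
      intro i A C hA hC hAC
      exact Stmt14.ind_pair (lab A) (lab (Function.update A i ((A i)ᶜ)))
        (lab C) (lab (Function.update C i ((C i)ᶜ))) e (htwin i A C hA hC hAC)
    have hsum := Stmt14.sum_phi_eq hX hsuit𝓕 hsuit𝓖 _ hφ
    rw [Finset.sum_boole, Finset.sum_boole] at hsum
    exact_mod_cast hsum
  refine ⟨?_, hcount⟩
  ext e
  rw [Finset.mem_image, Finset.mem_image]
  constructor
  · rintro ⟨A, hA, rfl⟩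
    have hpos : 0 < (𝓖.filter (fun B => lab B = lab A)).card := by
      rw [← hcount]
      exact Finset.card_pos.mpr ⟨A, Finset.mem_filter.mpr ⟨hA, rfl⟩⟩
    obtain ⟨B, hB⟩ := Finset.card_pos.mp hpos
    rw [Finset.mem_filter] at hB
    exact ⟨B, hB.1, hB.2⟩
  · rintro ⟨B, hB, rfl⟩
    have hpos : 0 < (𝓕.filter (fun A => lab A = lab B)).card := by
      rw [hcount]
      exact Finset.card_pos.mpr ⟨B, Finset.mem_filter.mpr ⟨hB, rfl⟩⟩
    obtain ⟨A, hA⟩ := Finset.card_pos.mp hpos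
    rw [Finset.mem_filter] at hA
    exact ⟨A, hA.1, hA.2⟩
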